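/- Let l ≥ 2 be an integer, let K be a subfield of ℝ that is a number field of degree l over ℚ, and let α_1, …, α_{l−1} ∈ K all lie in the interval (0,1) and be such that 1, α_1, …, α_{l−1} are linearly independent over ℚ. Let j be the (unique) index maximizing α_j / |N(α_j)|^{1/(l−1)}. Then the real numbers 1, ⟨1/α_j⟩, and ⟨α_i/α_j⟩ for i ≠ j are again linearly independent over ℚ, each of ⟨1/α_j⟩ and ⟨α_i/α_j⟩ (i ≠ j) lies in K ∩ [0,1); i.e., the Algebraic Jacobi-Perron transformation maps X_K into X_K. -/

import Mathlib

/-- Let `K ⊆ ℝ` be a number field of degree `l = n + 1 ≥ 2` over `ℚ` and let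
`α 0, …, α (n-1) ∈ K` lie in `(0,1)` with `1, α 0, …, α (n-1)` linearly independent over
`ℚ`.  If `j` is the (unique) index maximizing `α j / |N(α j)|^(1/(l-1))`, then the reals
`1, ⟨1/α j⟩, ⟨α i/α j⟩ (i ≠ j)` are again linearly independent over `ℚ` and each of
`⟨1/α j⟩`, `⟨α i/α j⟩` lies in `K ∩ [0,1)`: the Algebraic Jacobi-Perron transformation maps
`X_K` into `X_K`.  (Here `⟨x⟩ = x - ⌊x⌋` is the fractional part, `Int.fract`.) -/
theorem stmt_1 (n : ℕ) (hn : 1 ≤ n)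
    (K : IntermediateField ℚ ℝ) [FiniteDimensional ℚ K]
    (hdeg : Module.finrank ℚ K = n + 1)
    (α : Fin n → K)
    (hmem : ∀ i, 0 < (α i : ℝ) ∧ (α i : ℝ) < 1)
    (hind : LinearIndependent ℚ (Fin.cons (1 : ℝ) (fun i => (α i : ℝ))))
    (j : Fin n)
    (hj : ∀ i, i ≠ j →
      (α i : ℝ) / (|(Algebra.norm ℚ (α i) : ℚ)| : ℝ) ^ ((n : ℝ)⁻¹) <
      (α j : ℝ) / (|(Algebra.norm ℚ (α j) : ℚ)| : ℝ) ^ ((n : ℝ)⁻¹)) :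
    LinearIndependent ℚ (Fin.cons (1 : ℝ) (fun i =>
        if i = j then Int.fract (1 / (α j : ℝ)) else Int.fract ((α i : ℝ) / (α j : ℝ)))) ∧
    ∀ i : Fin n,
      (if i = j then Int.fract (1 / (α j : ℝ)) else Int.fract ((α i : ℝ) / (α j : ℝ))) ∈ K ∧
      0 ≤ (if i = j then Int.fract (1 / (α j : ℝ)) else Int.fract ((α i : ℝ) / (α j : ℝ))) ∧
      (if i = j then Int.fract (1 / (α j : ℝ)) else Int.fract ((α i : ℝ) / (α j : ℝ))) < 1 := by
  have hβj : (0:ℝ) < (α j : ℝ) := (hmem j).1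
  have hβj' : (α j : ℝ) ≠ 0 := ne_of_gt hβj
  constructor
  · rw [Fintype.linearIndependent_iff] at hind ⊢
    intro g hg
    set β : Fin n → ℝ := fun i => (α i : ℝ) with hβ
    set T : Fin n → ℝ := fun i => if i = j then 1 / β j else β i / β j with hT
    set f : Fin n → ℤ := fun i => ⌊T i⌋ with hf
    set A : ℚ := g 0 - ∑ i, g i.succ * (f i : ℚ) with hA
    set F : ℝ := ∑ i, (g i.succ : ℝ) * (f i : ℝ) with hF
    set S : ℝ := ∑ i, (g i.succ : ℝ) * β i with hS
    have hAcast : (A : ℝ) = (g 0 : ℝ) - F := by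
      rw [hA]; push_cast; rfl
    -- rewrite the hypothesis sum
    rw [Fin.sum_univ_succ] at hg
    simp only [Fin.cons_zero, Fin.cons_succ, smul_eq_mul, Rat.smul_def, mul_one] at hg
    have hg' : (g 0 : ℝ) + ∑ i, (g i.succ : ℝ) * Int.fract (T i) = 0 := by
      rw [← hg]
      congr 1
      refine Finset.sum_congr rfl fun i _ => ?_
      by_cases h : i = j <;> simp [hT, hβ, h]
    have e1 : ∀ i : Fin n, (g i.succ : ℝ) * Int.fract (T i) * β j
        = (g i.succ : ℝ) * (if i = j then (1:ℝ) else β i) - (g i.succ : ℝ) * (f i : ℝ) * β j := by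
      intro i
      rw [Int.fract, hf]
      by_cases h : i = j
      · simp only [h, hT, if_pos rfl]
        field_simp
        simp only [↓reduceIte]; linear_combination (↑(g j.succ):ℝ) * mul_inv_cancel₀ (show β j ≠ 0 from hβj')
      · simp only [hT, if_neg h]
        field_simp
        linear_combination (↑(g i.succ):ℝ) * β i * mul_inv_cancel₀ (show β j ≠ 0 from hβj')
    have split1 : ∑ i, (g i.succ : ℝ) * (if i = j then (1:ℝ) else β i)
        = (g j.succ : ℝ) * (1 - β j) + S := by
      have key : ∀ i : Fin n, (g i.succ : ℝ) * (if i = j then (1:ℝ) else β i)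
          = (if i = j then (g i.succ : ℝ) * (1 - β i) else 0) + (g i.succ : ℝ) * β i := by
        intro i
        by_cases h : i = j <;> simp [h] <;> ring
      rw [Finset.sum_congr rfl fun i _ => key i, Finset.sum_add_distrib,
        Finset.sum_ite_eq' Finset.univ j (fun i => (g i.succ : ℝ) * (1 - β i))]
      simp [hS]
    have e2 : ((g 0 : ℝ) + ∑ i, (g i.succ : ℝ) * Int.fract (T i)) * β j = 0 := by
      rw [hg', zero_mul]
    rw [add_mul, Finset.sum_mul, Finset.sum_congr rfl fun i _ => e1 i,
      Finset.sum_sub_distrib, split1, ← Finset.sum_mul, ← hF] at e2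
    -- the new relation among 1, α i
    set h : Fin (n+1) → ℚ := Fin.cons (g j.succ) (fun i => if i = j then A else g i.succ)
      with hh
    have key : ∑ k, h k • ((Fin.cons (1:ℝ) β : Fin (n+1) → ℝ)) k = 0 := by
      rw [Fin.sum_univ_succ]
      simp only [hh, Fin.cons_zero, Fin.cons_succ, Rat.smul_def, mul_one]
      have split2 : ∑ i, (((if i = j then A else g i.succ : ℚ)) : ℝ) * β i
          = ((A : ℝ) - (g j.succ : ℝ)) * β j + S := by
        have key2 : ∀ i : Fin n, (((if i = j then A else g i.succ : ℚ)) : ℝ) * β i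
            = (if i = j then ((A : ℝ) - (g i.succ : ℝ)) * β i else 0) + (g i.succ : ℝ) * β i := by
          intro i
          by_cases h : i = j <;> simp [h] <;> ring
        rw [Finset.sum_congr rfl fun i _ => key2 i, Finset.sum_add_distrib,
          Finset.sum_ite_eq' Finset.univ j (fun i => ((A : ℝ) - (g i.succ : ℝ)) * β i)]
        simp [hS]
      rw [split2, hAcast]
      linear_combination e2
    have hz := hind h key
    intro k
    refine Fin.cases ?_ ?_ k
    · have hzj := hz 0
      simp only [hh, Fin.cons_zero] at hzj
      have hAz : A = 0 := by
        have := hz j.succ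
        simpa [hh, Fin.cons_succ] using this
      have hgz : ∀ i : Fin n, g i.succ = 0 := by
        intro i
        by_cases h' : i = j
        · rw [h']; exact hzj
        · have := hz i.succ
          simpa [hh, Fin.cons_succ, h'] using this
      have hg0 : g 0 = ∑ i, g i.succ * (f i : ℚ) := by
        have h0 : g 0 - ∑ i, g i.succ * (f i : ℚ) = 0 := by rw [← hA]; exact hAz
        linarith
      rw [hg0]
      simp [hgz]
    · intro i
      by_cases h' : i = j
      · rw [h']
        have := hz 0
        simpa [hh, Fin.cons_zero] using this
      · have := hz i.succ
        simpa [hh, Fin.cons_succ, h'] using this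
  · intro i
    by_cases h : i = j
    · simp only [h, if_pos rfl]
      refine ⟨?_, Int.fract_nonneg _, Int.fract_lt_one _⟩
      rw [Int.fract]
      have h1 : (1 / (α j : ℝ)) = ((1 / α j : K) : ℝ) := rfl
      refine sub_mem ?_ (intCast_mem K _)
      rw [h1]; exact (1 / α j).2
    · simp only [if_neg h]
      refine ⟨?_, Int.fract_nonneg _, Int.fract_lt_one _⟩
      rw [Int.fract]
      have h1 : ((α i : ℝ) / (α j : ℝ)) = ((α i / α j : K) : ℝ) := rfl
      refine sub_mem ?_ (intCast_mem K _)
      rw [h1]; exact (α i / α j).2
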